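/- For all real numbers r > 0, θ > 0 and all t ≥ 0, the Laplace transform of the digamma distribution satisfies ∑_{z=1}^∞ e^{−tz} · digamma(z; r, θ) = 1 − [ψ(r+θ) − ψ(θ)]⁻¹ ∫₀¹ [1 − ((1−p)/(1−p·e^{−t}))^r] · p^{−1}(1−p)^{θ−1} dp, where the integral on the right-hand side is finite. -/

import Mathlib

open scoped BigOperators
open MeasureTheory

/-- Rising factorial `(a)_z = a(a+1)⋯(a+z-1)`. -/
noncomputable def risingFac (a : ℝ) (z : ℕ) : ℝ := ∏ i ∈ Finset.range z, (a + i)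

/-- Digamma function `ψ(x) = Γ'(x)/Γ(x)`. -/
noncomputable def psi (x : ℝ) : ℝ := deriv Real.Gamma x / Real.Gamma x

/-- Probability mass function of the digamma distribution (for `z ≥ 1`). -/
noncomputable def digammaPMF (r θ : ℝ) (z : ℕ) : ℝ :=
  (psi (r + θ) - psi θ)⁻¹ * (risingFac r z / (risingFac (r + θ) z * z))

lemma risingFac_zero (a : ℝ) : risingFac a 0 = 1 := by simp [risingFac]

lemma risingFac_succ (a : ℝ) (n : ℕ) : risingFac a (n + 1) = risingFac a n * (a + n) := by
  simp [risingFac, Finset.prod_range_succ]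

lemma risingFac_pos {a : ℝ} (ha : 0 < a) (n : ℕ) : 0 < risingFac a n := by
  induction n with
  | zero => simp [risingFac_zero]
  | succ n ih => rw [risingFac_succ]; positivity

/-- ratio computation helper -/
lemma tendsto_ratio_aux (c : ℝ) {y : ℝ} :
    Filter.Tendsto (fun n : ℕ => (c + n) / (n + 1) * y) Filter.atTop (nhds y) := by
  have h1 : Filter.Tendsto (fun n : ℕ => (c + n) / (n + 1)) Filter.atTop (nhds 1) := by
    have h2 : ∀ n : ℕ, (c + n : ℝ) / (n + 1) = 1 + (c - 1) * (1 / (n + 1)) := by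
      intro n
      have : (n : ℝ) + 1 ≠ 0 := by positivity
      field_simp
      ring
    simp_rw [h2]
    have := (tendsto_one_div_add_atTop_nhds_zero_nat).const_mul (c - 1)
    simpa using (tendsto_const_nhds (x := (1:ℝ))).add this
  simpa using h1.mul_const y

lemma summable_rising {a : ℝ} (ha : 0 < a) {y : ℝ} (h0 : 0 < y) (h1 : y < 1) :
    Summable (fun n : ℕ => risingFac a n / n.factorial * y ^ n) := by
  apply summable_of_ratio_test_tendsto_lt_one h1
  · filter_upwards with n
    have := risingFac_pos ha n
    have : (0:ℝ) < risingFac a n / n.factorial * y ^ n := by positivity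
    exact ne_of_gt this
  · have key : ∀ n : ℕ, ‖risingFac a (n+1) / (n+1).factorial * y ^ (n+1)‖ /
        ‖risingFac a n / n.factorial * y ^ n‖ = (a + n) / (n + 1) * y := by
      intro n
      have hp1 : (0:ℝ) < risingFac a n / n.factorial * y ^ n := by
        have := risingFac_pos ha n; positivity
      have hp2 : (0:ℝ) < risingFac a (n+1) / (n+1).factorial * y ^ (n+1) := by
        have := risingFac_pos ha (n+1); positivity
      rw [Real.norm_eq_abs, Real.norm_eq_abs, abs_of_pos hp1, abs_of_pos hp2,
        risingFac_succ, Nat.factorial_succ, pow_succ]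
      have h3 : (0:ℝ) < risingFac a n := risingFac_pos ha n
      have h4 : (n.factorial : ℝ) ≠ 0 := by positivity
      have h5 : ((n:ℝ) + 1) ≠ 0 := by positivity
      field_simp
      push_cast; ring
    simp_rw [key]
    exact tendsto_ratio_aux a

lemma summable_rising' {a : ℝ} (ha : 0 < a) {y : ℝ} (h0 : 0 < y) (h1 : y < 1) :
    Summable (fun n : ℕ => risingFac a (n+1) * y ^ (n+1) / n.factorial) := by
  apply summable_of_ratio_test_tendsto_lt_one h1
  · filter_upwards with n
    have := risingFac_pos ha (n+1)
    have : (0:ℝ) < risingFac a (n+1) * y ^ (n+1) / n.factorial := by positivity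
    exact ne_of_gt this
  · have key : ∀ n : ℕ, ‖risingFac a (n+2) * y ^ (n+2) / (n+1).factorial‖ /
        ‖risingFac a (n+1) * y ^ (n+1) / n.factorial‖ = (a + (n+1)) / (n + 1) * y := by
      intro n
      have hp1 : (0:ℝ) < risingFac a (n+1) * y ^ (n+1) / n.factorial := by
        have := risingFac_pos ha (n+1); positivity
      have hp2 : (0:ℝ) < risingFac a (n+2) * y ^ (n+2) / (n+1).factorial := by
        have := risingFac_pos ha (n+2); positivity
      rw [Real.norm_eq_abs, Real.norm_eq_abs, abs_of_pos hp1, abs_of_pos hp2,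
        show n+2 = (n+1)+1 from rfl, risingFac_succ, Nat.factorial_succ, pow_succ]
      have h3 : (0:ℝ) < risingFac a (n+1) := risingFac_pos ha (n+1)
      have h4 : (n.factorial : ℝ) ≠ 0 := by positivity
      have h5 : ((n:ℝ) + 1) ≠ 0 := by positivity
      field_simp
      push_cast; ring
    simp_rw [key]
    have := tendsto_ratio_aux (a+1) (y := y)
    apply this.congr
    intro n; push_cast; ring_nf

open Set Filter

section binom
variable {a y : ℝ}

/-- formula for iterated derivatives of `(1-x)^(-a)` within `Icc 0 y`. -/
lemma iterDeriv_one_sub_rpow (h0 : 0 < y) (h1 : y < 1) :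
    ∀ n : ℕ, ∀ x ∈ Icc (0:ℝ) y,
      iteratedDerivWithin n (fun x : ℝ => (1 - x) ^ (-a)) (Icc 0 y) x
        = risingFac a n * (1 - x) ^ (-a - n) := by
  have hud : UniqueDiffOn ℝ (Icc (0:ℝ) y) := uniqueDiffOn_Icc h0
  intro n
  induction n with
  | zero =>
    intro x hx
    simp [risingFac_zero]
  | succ n ih =>
    intro x hx
    have hx1 : 1 - x ≠ 0 := by
      have : x < 1 := lt_of_le_of_lt hx.2 h1; nlinarith
    rw [iteratedDerivWithin_succ]
    rw [derivWithin_congr ih (ih x hx)]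
    have hdiff : HasDerivAt (fun x : ℝ => risingFac a n * (1 - x) ^ (-a - n))
        (risingFac a n * ((-1) * (-a - n) * (1 - x) ^ (-a - n - 1))) x := by
      have h2 : HasDerivAt (fun x : ℝ => 1 - x) (-1) x := by
        simpa using (hasDerivAt_id x).const_sub 1
      exact (h2.rpow_const (Or.inl hx1)).const_mul _
    rw [hdiff.differentiableAt.derivWithin (hud x hx)]
    rw [hdiff.deriv]
    rw [risingFac_succ]
    have : (-a - n - 1 : ℝ) = -a - (n+1 : ℕ) := by push_cast; ring
    rw [this]
    ring

lemma hasSum_binomial (ha : 0 < a) (h0 : 0 < y) (h1 : y < 1) :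
    HasSum (fun n : ℕ => risingFac a n / n.factorial * y ^ n) ((1 - y) ^ (-a)) := by
  set f : ℝ → ℝ := fun x => (1 - x) ^ (-a) with hf
  set g : ℕ → ℝ := fun n => risingFac a n / n.factorial * y ^ n with hg
  have hsummable : Summable g := summable_rising ha h0 h1
  have hy1 : (0:ℝ) < 1 - y := by linarith
  have hcd : ∀ m : ℕ, ContDiffOn ℝ m f (Icc 0 y) := by
    intro m x hx
    have hx1 : (1:ℝ) - x ≠ 0 := by
      have : x < 1 := lt_of_le_of_lt hx.2 h1; nlinarith
    have hc1 : ContDiffAt ℝ m (fun x : ℝ => x ^ (-a)) (1 - x) :=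
      Real.contDiffAt_rpow_const_of_ne hx1
    have hc2 : ContDiffAt ℝ m (fun x : ℝ => (1:ℝ) - x) x :=
      (contDiff_const.sub contDiff_id).contDiffAt
    exact (hc1.comp x hc2).contDiffWithinAt
  have hiter := iterDeriv_one_sub_rpow (a := a) h0 h1
  have hTaylor : ∀ n : ℕ, taylorWithinEval f n (Icc 0 y) 0 y = ∑ k ∈ Finset.range (n+1), g k := by
    intro n
    rw [taylor_within_apply]
    apply Finset.sum_congr rfl
    intro k hk
    rw [hiter k 0 ⟨le_refl 0, le_of_lt h0⟩]
    rw [show (1:ℝ) - 0 = 1 by norm_num, Real.one_rpow, sub_zero, smul_eq_mul, hg]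
    ring
  -- remainder bound
  set R : ℕ → ℝ := fun n => risingFac a (n+1) * y ^ (n+1) / n.factorial * (1 - y) ^ (-a - 1)
    with hR
  have hRsum : Summable R := (summable_rising' ha h0 h1).mul_right _
  have hR0 : Tendsto R atTop (nhds 0) := hRsum.tendsto_atTop_zero
  have hrem : ∀ n : ℕ, ‖f y - ∑ k ∈ Finset.range (n+1), g k‖ ≤ R n := by
    intro n
    obtain ⟨x', hx', heq⟩ := taylor_mean_remainder_cauchy h0.ne (by rw [uIcc_of_le h0.le]; exact hcd n)
      (by
        rw [uIcc_of_le h0.le, uIoo_of_le h0.le]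
        intro x hx
        have hx1 : (1:ℝ) - x ≠ 0 := by
          have : x < 1 := lt_of_lt_of_le (lt_of_lt_of_le hx.2 (le_refl y)) (le_of_lt h1)
          nlinarith
        have h2 : HasDerivAt (fun x : ℝ => 1 - x) (-1) x := by
          simpa using (hasDerivAt_id x).const_sub 1
        have hdiff : HasDerivAt (fun x : ℝ => risingFac a n * (1 - x) ^ (-a - n))
            (risingFac a n * ((-1) * (-a - n) * (1 - x) ^ (-a - n - 1))) x :=
          (h2.rpow_const (Or.inl hx1)).const_mul _
        refine (hdiff.differentiableAt.differentiableWithinAt).congr ?_ ?_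
        · intro z hz; exact hiter n z (Ioo_subset_Icc_self hz)
        · exact hiter n x (Ioo_subset_Icc_self hx))
    rw [uIcc_of_le h0.le] at heq
    rw [uIoo_of_le h0.le] at hx'
    rw [← hTaylor n, heq]
    have hx'0 : 0 < x' := hx'.1
    have hx'y : x' < y := hx'.2
    have h1x' : 0 < 1 - x' := by linarith
    rw [hiter (n+1) x' ⟨le_of_lt hx'0, le_of_lt hx'y⟩]
    -- bound
    have hpos : (0:ℝ) < risingFac a (n+1) := risingFac_pos ha (n+1)
    have e1 : (1 - x') ^ (-a - (n+1 : ℕ)) = (1 - x') ^ (-a - 1) * ((1 - x') ^ n)⁻¹ := by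
      rw [← Real.rpow_natCast (1 - x') n, ← Real.rpow_neg (le_of_lt h1x'),
        ← Real.rpow_add h1x']
      congr 1; push_cast; ring
    have hterm : risingFac a (n+1) * (1 - x') ^ (-a - (n+1:ℕ)) * (y - x') ^ n / n.factorial
          * (y - 0)
        = risingFac a (n+1) * (1 - x') ^ (-a-1) * ((y - x')/(1 - x')) ^ n / n.factorial * y := by
      rw [e1, div_pow]
      field_simp
      ring
    rw [hterm, Real.norm_eq_abs]
    have hb1 : (y - x')/(1-x') ≤ y := by
      rw [div_le_iff₀ h1x']
      nlinarith
    have hb0 : 0 ≤ (y - x')/(1-x') := div_nonneg (by linarith) (le_of_lt h1x')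
    have hb2 : (1 - x') ^ (-a-1) ≤ (1 - y) ^ (-a-1) :=
      Real.rpow_le_rpow_of_nonpos hy1 (by linarith) (by linarith)
    have habs : 0 ≤ risingFac a (n+1) * (1 - x') ^ (-a-1) * ((y - x')/(1 - x')) ^ n
        / n.factorial * y := by
      have := Real.rpow_nonneg (le_of_lt h1x') (-a-1)
      positivity
    rw [abs_of_nonneg habs, hR]
    have hfac : (0:ℝ) < n.factorial := by positivity
    have hyn : ((y - x')/(1-x'))^n ≤ y^n := pow_le_pow_left₀ hb0 hb1 n
    have h2 := Real.rpow_nonneg (le_of_lt h1x') (-a-1)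
    calc risingFac a (n+1) * (1 - x') ^ (-a-1) * ((y - x')/(1 - x')) ^ n / n.factorial * y
        ≤ risingFac a (n+1) * (1 - y) ^ (-a-1) * y ^ n / n.factorial * y := by
          gcongr
      _ = risingFac a (n+1) * y ^ (n+1) / n.factorial * (1-y)^(-a-1) := by ring
  -- conclude
  have htendsto : Tendsto (fun n => ∑ k ∈ Finset.range (n+1), g k) atTop (nhds (f y)) := by
    have h2 : Tendsto (fun n => f y - ∑ k ∈ Finset.range (n+1), g k) atTop (nhds 0) :=
      squeeze_zero_norm hrem hR0
    have h3 := (tendsto_const_nhds (x := f y)).sub h2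
    simpa using h3
  have h4 : Tendsto (fun n => ∑ k ∈ Finset.range n, g k) atTop (nhds (∑' k, g k)) :=
    hsummable.hasSum.tendsto_sum_nat
  have h5 : Tendsto (fun n => ∑ k ∈ Finset.range (n+1), g k) atTop (nhds (∑' k, g k)) :=
    h4.comp (tendsto_add_atTop_nat 1)
  have heq2 : ∑' k, g k = (1 - y) ^ (-a) := tendsto_nhds_unique h5 htendsto
  rw [← heq2]
  exact hsummable.hasSum

end binom

section beta

/-- Integrability of `(1-p)^(c-1)` on `Ioo 0 1` for `c > 0`. -/
lemma integrableOn_one_sub_rpow {c : ℝ} (hc : 0 < c) :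
    IntegrableOn (fun p : ℝ => (1 - p) ^ (c - 1)) (Ioo 0 1) := by
  have h1 : IntervalIntegrable (fun x : ℝ => x ^ (c-1)) MeasureTheory.volume 0 1 :=
    intervalIntegral.intervalIntegrable_rpow' (by linarith)
  have h2 := h1.comp_sub_left 1
  simp only [sub_zero, sub_self] at h2
  have h3 : IntervalIntegrable (fun x : ℝ => (1 - x) ^ (c-1)) MeasureTheory.volume 0 1 :=
    h2.symm
  rw [intervalIntegrable_iff_integrableOn_Ioc_of_le (by norm_num : (0:ℝ) ≤ 1)] at h3
  exact h3.mono_set Ioo_subset_Ioc_self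

/-- value of `∫ (1-p)^(c-1)` on `Ioo 0 1`. -/
lemma integral_one_sub_rpow {c : ℝ} (hc : 0 < c) :
    ∫ p in Ioo (0:ℝ) 1, (1 - p) ^ (c - 1) = 1 / c := by
  have h0 : ∫ x in (0:ℝ)..1, x ^ (c-1) = 1/c := by
    rw [integral_rpow (Or.inl (by linarith))]
    rw [Real.one_rpow, Real.zero_rpow (by linarith : c - 1 + 1 ≠ 0)]
    norm_num
  have h1 : ∫ x in (0:ℝ)..1, (1 - x) ^ (c-1) = 1/c := by
    rw [show (fun x : ℝ => (1 - x) ^ (c-1)) = (fun x : ℝ => ((fun z : ℝ => z ^ (c-1)) (1 - x)))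
      from rfl]
    rw [intervalIntegral.integral_comp_sub_left (fun z : ℝ => z ^ (c-1)) 1]
    simpa using h0
  rw [← MeasureTheory.integral_Ioc_eq_integral_Ioo,
    ← intervalIntegral.integral_of_le (by norm_num : (0:ℝ) ≤ 1)]
  exact h1

lemma continuousOn_one_sub_rpow (c : ℝ) :
    ContinuousOn (fun p : ℝ => (1 - p) ^ c) (Ioo (0:ℝ) 1) := by
  intro p hp
  have h1 : (1:ℝ) - p ≠ 0 := by have := hp.2; nlinarith [hp.1]
  apply ContinuousAt.continuousWithinAt
  exact (Real.continuousAt_rpow_const _ _ (Or.inl h1)).comp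
    ((continuous_const.sub continuous_id).continuousAt)

/-- Integrability of `p^m (1-p)^(c-1)` on `Ioo 0 1`. -/
lemma integrableOn_pow_mul {c : ℝ} (hc : 0 < c) (m : ℕ) :
    IntegrableOn (fun p : ℝ => p ^ m * (1 - p) ^ (c - 1)) (Ioo 0 1) := by
  apply MeasureTheory.Integrable.mono (integrableOn_one_sub_rpow hc)
  · apply ContinuousOn.aestronglyMeasurable _ measurableSet_Ioo
    exact (continuousOn_pow m).mul (continuousOn_one_sub_rpow (c-1))
  · rw [MeasureTheory.ae_restrict_iff' measurableSet_Ioo]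
    filter_upwards with p hp
    have h0 : 0 ≤ p := le_of_lt hp.1
    have h2 : 0 ≤ (1 - p) ^ (c-1) := Real.rpow_nonneg (by linarith [hp.2]) _
    rw [Real.norm_eq_abs, Real.norm_eq_abs, abs_of_nonneg (by positivity),
      abs_of_nonneg h2]
    have : p ^ m ≤ 1 := pow_le_one₀ h0 (le_of_lt hp.2)
    nlinarith [pow_nonneg h0 m]

/-- Real beta integral for natural first argument. -/
lemma integral_beta_nat {s : ℝ} (hs : 0 < s) (m : ℕ) :
    ∫ p in Ioo (0:ℝ) 1, p ^ m * (1 - p) ^ (s - 1) = m.factorial / risingFac s (m+1) := by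
  have h1 := Complex.betaIntegral_eval_nat_add_one_right
    (by simpa using hs : 0 < (Complex.ofReal s).re) m
  rw [← Complex.betaIntegral_symm] at h1
  -- betaIntegral (m+1) s = ∫ x in 0..1, x^(m+1-1) (1-x)^(s-1)  (complex)
  have h2 : Complex.betaIntegral (m+1 : ℂ) (s : ℂ)
      = ((∫ p in Ioo (0:ℝ) 1, p ^ m * (1 - p) ^ (s - 1) : ℝ) : ℂ) := by
    rw [Complex.betaIntegral]
    rw [intervalIntegral.integral_of_le (by norm_num : (0:ℝ) ≤ 1),
      MeasureTheory.integral_Ioc_eq_integral_Ioo]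
    refine Eq.trans (MeasureTheory.setIntegral_congr_fun measurableSet_Ioo ?_) integral_ofReal
    intro x hx
    have hx0 : (0:ℝ) < x := hx.1
    have hx1 : (0:ℝ) ≤ 1 - x := by linarith [hx.2]
    push_cast
    rw [show (m:ℂ) + 1 - 1 = (m : ℂ) by ring, Complex.cpow_natCast,
      show ((1:ℂ) - (x:ℝ)) = ((1 - x :ℝ):ℂ) by push_cast; ring,
      show ((s:ℂ) - 1) = ((s - 1 : ℝ):ℂ) by push_cast; ring,
      ← Complex.ofReal_cpow hx1]
    norm_cast
  rw [h2] at h1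
  have h3 : (∏ j ∈ Finset.range (m+1), ((s:ℂ) + (j:ℕ))) = ((risingFac s (m+1) : ℝ) : ℂ) := by
    rw [risingFac]
    push_cast
    rfl
  rw [h3] at h1
  have h4 : ((m.factorial : ℝ) : ℂ) / ((risingFac s (m+1) : ℝ) : ℂ)
      = (((m.factorial : ℝ) / risingFac s (m+1) : ℝ) : ℂ) := by
    push_cast; ring
  rw [show ((m.factorial : ℕ) : ℂ) = ((m.factorial : ℝ) : ℂ) by push_cast; rfl] at h1
  rw [h4] at h1
  exact_mod_cast h1

end beta

section tonelli

/-- Tonelli for nonnegative series of integrable functions on `Ioo 0 1`, when the pointwise sum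
is integrable. -/
lemma hasSum_integral_Ioo (F : ℕ → ℝ → ℝ) (Φ : ℝ → ℝ)
    (hF0 : ∀ m, ∀ p ∈ Ioo (0:ℝ) 1, 0 ≤ F m p)
    (hFi : ∀ m, IntegrableOn (F m) (Ioo (0:ℝ) 1))
    (hsum : ∀ p ∈ Ioo (0:ℝ) 1, HasSum (fun m => F m p) (Φ p))
    (hΦi : IntegrableOn Φ (Ioo (0:ℝ) 1)) :
    HasSum (fun m => ∫ p in Ioo (0:ℝ) 1, F m p) (∫ p in Ioo (0:ℝ) 1, Φ p) := by
  set ν := MeasureTheory.volume.restrict (Ioo (0:ℝ) 1) with hν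
  have hmem : ∀ᵐ p ∂ν, p ∈ Ioo (0:ℝ) 1 :=
    MeasureTheory.ae_restrict_mem measurableSet_Ioo
  have hF0' : ∀ m, 0 ≤ᶠ[MeasureTheory.ae ν] F m := by
    intro m; filter_upwards [hmem] with p hp using hF0 m p hp
  have hΦ0 : 0 ≤ᶠ[MeasureTheory.ae ν] Φ := by
    filter_upwards [hmem] with p hp
    exact (hsum p hp).nonneg (fun m => hF0 m p hp) -- check name
  have hkey : ∫⁻ p, ENNReal.ofReal (Φ p) ∂ν = ∑' m, ∫⁻ p, ENNReal.ofReal (F m p) ∂ν := by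
    rw [← MeasureTheory.lintegral_tsum (f := fun m p => ENNReal.ofReal (F m p)) (fun m =>
      (ENNReal.measurable_ofReal.comp_aemeasurable
        ((hFi m).aestronglyMeasurable.aemeasurable)))]
    apply MeasureTheory.lintegral_congr_ae
    filter_upwards [hmem] with p hp
    rw [← ENNReal.ofReal_tsum_of_nonneg (fun m => hF0 m p hp) (hsum p hp).summable,
      (hsum p hp).tsum_eq]
  have hFval : ∀ m, ∫⁻ p, ENNReal.ofReal (F m p) ∂ν = ENNReal.ofReal (∫ p, F m p ∂ν) := by
    intro m
    rw [MeasureTheory.ofReal_integral_eq_lintegral_ofReal (hFi m) (hF0' m)]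
  have hΦval : ∫⁻ p, ENNReal.ofReal (Φ p) ∂ν = ENNReal.ofReal (∫ p, Φ p ∂ν) :=
    (MeasureTheory.ofReal_integral_eq_lintegral_ofReal hΦi hΦ0).symm
  rw [hΦval] at hkey
  simp_rw [hFval] at hkey
  -- now convert back to real statement
  have hfin : ∑' m, ENNReal.ofReal (∫ p, F m p ∂ν) ≠ ⊤ := by
    rw [← hkey]; exact ENNReal.ofReal_ne_top
  have hsummable : Summable (fun m => ∫ p, F m p ∂ν) := by
    have h2 := ENNReal.summable_toReal hfin
    apply h2.congr
    intro m
    rw [ENNReal.toReal_ofReal (MeasureTheory.integral_nonneg_of_ae (hF0' m))]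
  have htsum : ∑' m, ∫ p, F m p ∂ν = ∫ p, Φ p ∂ν := by
    have h3 := ENNReal.tsum_toReal_eq (f := fun m => ENNReal.ofReal (∫ p, F m p ∂ν))
      (fun m => ENNReal.ofReal_ne_top)
    rw [← hkey] at h3
    rw [ENNReal.toReal_ofReal (MeasureTheory.integral_nonneg_of_ae hΦ0)] at h3
    rw [h3]
    apply tsum_congr
    intro m
    rw [ENNReal.toReal_ofReal (MeasureTheory.integral_nonneg_of_ae (hF0' m))]
  rw [← htsum]
  exact hsummable.hasSum

end tonelli


section digamma

lemma Gamma_diff {s : ℝ} (hs : 0 < s) : DifferentiableAt ℝ Real.Gamma s :=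
  Real.differentiableAt_Gamma (fun m => by
    have : -(m:ℝ) ≤ 0 := neg_nonpos.mpr (Nat.cast_nonneg m)
    linarith)

lemma logGamma_diff {s : ℝ} (hs : 0 < s) :
    DifferentiableAt ℝ (Real.log ∘ Real.Gamma) s := by
  have := (Gamma_diff hs).log (Real.Gamma_pos_of_pos hs).ne'
  simpa [Function.comp_def] using this

lemma psi_eq_deriv_logGamma {s : ℝ} (hs : 0 < s) :
    psi s = deriv (Real.log ∘ Real.Gamma) s := by
  rw [psi, Function.comp_def, deriv.log (Gamma_diff hs) (Real.Gamma_pos_of_pos hs).ne']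

lemma psi_add_one {s : ℝ} (hs : 0 < s) : psi (s + 1) = psi s + 1 / s := by
  have hG : HasDerivAt Real.Gamma (deriv Real.Gamma s) s := (Gamma_diff hs).hasDerivAt
  have hmul : HasDerivAt (fun x : ℝ => x * Real.Gamma x)
      (1 * Real.Gamma s + s * deriv Real.Gamma s) s := (hasDerivAt_id s).mul hG
  have hshift : HasDerivAt (fun x : ℝ => Real.Gamma (x + 1))
      (deriv Real.Gamma (s + 1)) s := by
    have := (Gamma_diff (by linarith : (0:ℝ) < s + 1)).hasDerivAt
    exact this.comp_add_const s 1
  have hEq : (fun x : ℝ => Real.Gamma (x + 1)) =ᶠ[nhds s] (fun x : ℝ => x * Real.Gamma x) := by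
    filter_upwards [eventually_gt_nhds hs] with x hx
    rw [Real.Gamma_add_one hx.ne']
  have h2 : HasDerivAt (fun x : ℝ => Real.Gamma (x + 1))
      (1 * Real.Gamma s + s * deriv Real.Gamma s) s := hmul.congr_of_eventuallyEq hEq
  have h3 : deriv Real.Gamma (s + 1) = Real.Gamma s + s * deriv Real.Gamma s := by
    have := hshift.unique h2
    linarith [this]
  have hΓs : Real.Gamma s ≠ 0 := (Real.Gamma_pos_of_pos hs).ne'
  have hs' : s ≠ 0 := hs.ne'
  rw [psi, psi, h3, Real.Gamma_add_one hs']
  field_simp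
  ring

lemma psi_mono {x y : ℝ} (hx : 0 < x) (hxy : x ≤ y) : psi x ≤ psi y := by
  rcases eq_or_lt_of_le hxy with rfl | hlt
  · exact le_refl _
  have hy : 0 < y := lt_trans hx hlt
  rw [psi_eq_deriv_logGamma hx, psi_eq_deriv_logGamma hy]
  have hc := Real.convexOn_log_Gamma
  calc deriv (Real.log ∘ Real.Gamma) x
      ≤ slope (Real.log ∘ Real.Gamma) x y :=
        hc.deriv_le_slope (mem_Ioi.mpr hx) (mem_Ioi.mpr hy) hlt (logGamma_diff hx)
    _ ≤ deriv (Real.log ∘ Real.Gamma) y :=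
        hc.slope_le_deriv (mem_Ioi.mpr hx) (mem_Ioi.mpr hy) hlt (logGamma_diff hy)

lemma psi_add_nat {s : ℝ} (hs : 0 < s) (N : ℕ) :
    psi (s + N) = psi s + ∑ n ∈ Finset.range N, 1 / (s + n) := by
  induction N with
  | zero => simp
  | succ N ih =>
    have h1 : (0:ℝ) < s + N := by positivity
    have h2 : s + (N+1 : ℕ) = (s + N) + 1 := by push_cast; ring
    rw [h2, psi_add_one h1, ih, Finset.sum_range_succ]
    ring

end digamma

section gauss
variable {r θ : ℝ}

lemma summable_d (hr : 0 < r) (hθ : 0 < θ) :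
    Summable (fun n : ℕ => 1 / (θ + n) - 1 / (r + θ + n)) := by
  set θ' := min θ 1 with hθ'
  have hθ'0 : 0 < θ' := lt_min hθ one_pos
  have hbase : Summable (fun n : ℕ => r / θ' ^ 2 * (1 / ((n:ℝ) + 1) ^ 2)) := by
    apply Summable.mul_left
    have h0 : Summable (fun n : ℕ => 1 / (n:ℝ) ^ 2) :=
      Real.summable_one_div_nat_pow.mpr one_lt_two
    have h1 := (summable_nat_add_iff 1).mpr h0
    apply h1.congr
    intro n
    push_cast
    ring
  apply Summable.of_nonneg_of_le _ _ hbase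
  · intro n
    have h1 : (0:ℝ) < θ + n := by positivity
    have h2 : (0:ℝ) < r + θ + n := by positivity
    rw [sub_nonneg, div_le_div_iff₀ h2 h1]
    nlinarith
  · intro n
    have h1 : (0:ℝ) < θ + n := by positivity
    have h2 : (0:ℝ) < r + θ + n := by positivity
    have key : 1 / (θ + n) - 1 / (r + θ + n) = r / ((θ + n) * (r + θ + n)) := by
      field_simp
      ring
    rw [key]
    have hb : θ' * ((n:ℝ) + 1) ≤ θ + n := by
      rcases le_total θ 1 with h | h
      · have : θ' = θ := min_eq_left h
        rw [this]
        nlinarith [Nat.cast_nonneg (α := ℝ) n]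
      · have : θ' = 1 := min_eq_right h
        rw [this]; nlinarith
    have hb2 : θ' * ((n:ℝ) + 1) ≤ r + θ + n := by linarith
    have hp : (0:ℝ) < θ' * ((n:ℝ) + 1) := by positivity
    have hcb : (θ' * ((n:ℝ)+1))^2 ≤ (θ + n) * (r + θ + n) := by nlinarith
    calc r / ((θ + n) * (r + θ + n)) ≤ r / (θ' * ((n:ℝ)+1))^2 :=
          div_le_div_of_nonneg_left hr.le (by positivity) hcb
      _ = r / θ'^2 * (1/((n:ℝ)+1)^2) := by
          rw [mul_pow]
          field_simp

lemma hasSum_d (hr : 0 < r) (hθ : 0 < θ) :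
    HasSum (fun n : ℕ => 1 / (θ + n) - 1 / (r + θ + n)) (psi (r + θ) - psi θ) := by
  have hsummable := summable_d hr hθ
  rw [hsummable.hasSum_iff_tendsto_nat]
  have hpart : ∀ N : ℕ, ∑ n ∈ Finset.range N, (1 / (θ + n) - 1 / (r + θ + n))
      = (psi (r + θ) - psi θ) - (psi (r + θ + N) - psi (θ + N)) := by
    intro N
    rw [Finset.sum_sub_distrib]
    have h1 := psi_add_nat hθ N
    have h2 := psi_add_nat (by linarith : (0:ℝ) < r + θ) N
    have h1' : ∑ n ∈ Finset.range N, 1 / (θ + n) = psi (θ + N) - psi θ := by linarith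
    have h2' : ∑ n ∈ Finset.range N, 1 / (r + θ + n) = psi (r + θ + N) - psi (r + θ) := by
      linarith
    rw [h1', h2']
    ring
  simp_rw [hpart]
  have key : Filter.Tendsto (fun N : ℕ => psi (r + θ + N) - psi (θ + N))
      Filter.atTop (nhds 0) := by
    set M := ⌈r⌉₊ with hM
    have hrM : r ≤ M := Nat.le_ceil r
    have hub : ∀ N : ℕ, psi (r + θ + N) - psi (θ + N) ≤ M / (θ + N) := by
      intro N
      have hθN : (0:ℝ) < θ + N := by positivity
      have h3 : psi (r + θ + N) ≤ psi ((θ + N) + M) := by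
        apply psi_mono (by positivity)
        push_cast; linarith
      have h4 := psi_add_nat hθN M
      have h5 : ∑ j ∈ Finset.range M, 1 / (θ + N + j) ≤ M / (θ + N) := by
        calc ∑ j ∈ Finset.range M, 1 / (θ + N + j)
            ≤ ∑ j ∈ Finset.range M, 1 / (θ + N) := by
              apply Finset.sum_le_sum
              intro j hj
              apply one_div_le_one_div_of_le hθN
              have : (0:ℝ) ≤ j := Nat.cast_nonneg j
              linarith
          _ = M / (θ + N) := by
              rw [Finset.sum_const, Finset.card_range, nsmul_eq_mul]
              ring
      have : psi ((θ + N) + M) = psi (θ + N) + ∑ j ∈ Finset.range M, 1 / (θ + N + j) := h4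
      linarith
    have hlb : ∀ N : ℕ, 0 ≤ psi (r + θ + N) - psi (θ + N) := by
      intro N
      have hθN : (0:ℝ) < θ + N := by positivity
      have := psi_mono hθN (by linarith : θ + N ≤ r + θ + N)
      linarith
    have hMto : Filter.Tendsto (fun N : ℕ => (M:ℝ) / (θ + N)) Filter.atTop (nhds 0) := by
      apply Filter.Tendsto.const_div_atTop
      apply Filter.tendsto_atTop_add_const_left
      exact tendsto_natCast_atTop_atTop
    exact squeeze_zero hlb hub hMto
  have := (tendsto_const_nhds (x := psi (r+θ) - psi θ)).sub key
  simpa using this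

end gauss

section I0
variable {r θ : ℝ}

lemma one_sub_rpow_le (hr : 0 < r) {p : ℝ} (hp0 : 0 < p) (hp1 : p < 1) :
    1 - (1 - p) ^ r ≤ max r 1 * p := by
  rcases le_total 1 r with h | h
  · have hb := one_add_mul_self_le_rpow_one_add (by linarith : (-1:ℝ) ≤ -p) h
    rw [show (1:ℝ) + -p = 1 - p by ring] at hb
    have : max r 1 = r := max_eq_left h
    rw [this]
    nlinarith
  · have hb : (1 - p) ^ (1:ℝ) ≤ (1 - p) ^ r :=
      Real.rpow_le_rpow_of_exponent_ge (by linarith) (by linarith) h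
    rw [Real.rpow_one] at hb
    have h1 : 1 ≤ max r 1 := le_max_right r 1
    nlinarith

lemma one_sub_rpow_nonneg (hr : 0 < r) {p : ℝ} (hp0 : 0 < p) (hp1 : p < 1) :
    0 ≤ 1 - (1 - p) ^ r := by
  have := Real.rpow_le_one (by linarith : (0:ℝ) ≤ 1 - p) (by linarith) (le_of_lt hr)
  linarith

lemma continuousOn_I0 (r θ : ℝ) :
    ContinuousOn (fun p : ℝ => (1 - (1 - p) ^ r) * (p⁻¹ * (1 - p) ^ (θ - 1)))
      (Ioo (0:ℝ) 1) := by
  apply ContinuousOn.mul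
  · exact continuousOn_const.sub (continuousOn_one_sub_rpow r)
  · apply ContinuousOn.mul
    · exact ContinuousOn.inv₀ continuousOn_id (fun p hp => hp.1.ne')
    · exact continuousOn_one_sub_rpow (θ - 1)

lemma I0_le (hr : 0 < r) (hθ : 0 < θ) {p : ℝ} (hp : p ∈ Ioo (0:ℝ) 1) :
    0 ≤ (1 - (1 - p) ^ r) * (p⁻¹ * (1 - p) ^ (θ - 1)) ∧
    (1 - (1 - p) ^ r) * (p⁻¹ * (1 - p) ^ (θ - 1)) ≤ max r 1 * (1 - p) ^ (θ - 1) := by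
  obtain ⟨hp0, hp1⟩ := hp
  have h1 : 0 ≤ 1 - (1 - p) ^ r := one_sub_rpow_nonneg hr hp0 hp1
  have h2 : 0 ≤ (1 - p) ^ (θ - 1) := Real.rpow_nonneg (by linarith) _
  have h3 : 0 < p⁻¹ := inv_pos.mpr hp0
  constructor
  · positivity
  · have h4 : (1 - (1 - p) ^ r) * p⁻¹ ≤ max r 1 := by
      calc (1 - (1-p)^r) * p⁻¹ ≤ (max r 1 * p) * p⁻¹ :=
            mul_le_mul_of_nonneg_right (one_sub_rpow_le hr hp0 hp1) (le_of_lt h3)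
        _ = max r 1 := by field_simp
    calc (1 - (1 - p) ^ r) * (p⁻¹ * (1 - p) ^ (θ - 1))
        = ((1 - (1 - p) ^ r) * p⁻¹) * (1 - p) ^ (θ - 1) := by ring
      _ ≤ max r 1 * (1 - p) ^ (θ - 1) := mul_le_mul_of_nonneg_right h4 h2

lemma integrableOn_I0 (hr : 0 < r) (hθ : 0 < θ) :
    IntegrableOn (fun p : ℝ => (1 - (1 - p) ^ r) * (p⁻¹ * (1 - p) ^ (θ - 1)))
      (Ioo (0:ℝ) 1) := by
  apply MeasureTheory.Integrable.mono ((integrableOn_one_sub_rpow hθ).const_mul (max r 1))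
  · exact (continuousOn_I0 r θ).aestronglyMeasurable measurableSet_Ioo
  · rw [MeasureTheory.ae_restrict_iff' measurableSet_Ioo]
    filter_upwards with p hp
    obtain ⟨hge, hle⟩ := I0_le hr hθ hp
    rw [Real.norm_eq_abs, Real.norm_eq_abs, abs_of_nonneg hge, abs_of_nonneg (by
      have h2 : (0:ℝ) ≤ (1 - p) ^ (θ - 1) := Real.rpow_nonneg (by linarith [hp.2]) _
      have : (0:ℝ) < max r 1 := lt_max_of_lt_right one_pos
      positivity)]
    exact hle

lemma hasSum_I0_integral (hr : 0 < r) (hθ : 0 < θ) :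
    HasSum (fun n : ℕ => 1 / (θ + n) - 1 / (r + θ + n))
      (∫ p in Ioo (0:ℝ) 1, (1 - (1 - p) ^ r) * (p⁻¹ * (1 - p) ^ (θ - 1))) := by
  have hF := hasSum_integral_Ioo
    (fun n p => (1 - p) ^ ((θ + n) - 1) - (1 - p) ^ ((r + θ + n) - 1))
    (fun p => (1 - (1 - p) ^ r) * (p⁻¹ * (1 - p) ^ (θ - 1)))
    ?_ ?_ ?_ (integrableOn_I0 hr hθ)
  · have hval : ∀ n : ℕ, (∫ p in Ioo (0:ℝ) 1,
        ((1 - p) ^ ((θ + n) - 1) - (1 - p) ^ ((r + θ + n) - 1)))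
        = 1 / (θ + n) - 1 / (r + θ + n) := by
      intro n
      rw [MeasureTheory.integral_sub (integrableOn_one_sub_rpow (by positivity : (0:ℝ) < θ + n))
        (integrableOn_one_sub_rpow (by positivity : (0:ℝ) < r + θ + n))]
      rw [integral_one_sub_rpow (by positivity : (0:ℝ) < θ + n),
        integral_one_sub_rpow (by positivity : (0:ℝ) < r + θ + n)]
    rwa [funext hval] at hF
  · intro n p hp
    rw [sub_nonneg]
    apply Real.rpow_le_rpow_of_exponent_ge (by linarith [hp.2]) (by linarith [hp.1])
    linarith
  · intro n
    exact (integrableOn_one_sub_rpow (by positivity : (0:ℝ) < θ + n)).sub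
      (integrableOn_one_sub_rpow (by positivity : (0:ℝ) < r + θ + n))
  · intro p hp
    obtain ⟨hp0, hp1⟩ := hp
    have h1p : (0:ℝ) < 1 - p := by linarith
    have hgeo := (hasSum_geometric_of_lt_one (by linarith : (0:ℝ) ≤ 1 - p)
      (by linarith : 1 - p < 1)).mul_right ((1 - p) ^ (θ - 1) - (1 - p) ^ ((r + θ) - 1))
    have hterm : ∀ n : ℕ, (1-p)^n * ((1 - p) ^ (θ - 1) - (1 - p) ^ ((r + θ) - 1))
        = (1 - p) ^ ((θ + n) - 1) - (1 - p) ^ ((r + θ + n) - 1) := by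
      intro n
      rw [← Real.rpow_natCast (1-p) n, mul_sub, ← Real.rpow_add h1p, ← Real.rpow_add h1p]
      congr 1 <;> · congr 1; ring
    rw [funext hterm] at hgeo
    have htarget : (1 - (1-p))⁻¹ * ((1 - p) ^ (θ - 1) - (1 - p) ^ ((r + θ) - 1))
        = (1 - (1 - p) ^ r) * (p⁻¹ * (1 - p) ^ (θ - 1)) := by
      rw [show (1:ℝ) - (1-p) = p by ring]
      rw [show (r + θ) - 1 = r + (θ - 1) by ring, Real.rpow_add h1p]
      ring
    rwa [htarget] at hgeo

lemma I0_eq (hr : 0 < r) (hθ : 0 < θ) :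
    (∫ p in Ioo (0:ℝ) 1, (1 - (1 - p) ^ r) * (p⁻¹ * (1 - p) ^ (θ - 1)))
      = psi (r + θ) - psi θ :=
  (hasSum_I0_integral hr hθ).unique (hasSum_d hr hθ)

lemma psi_diff_pos (hr : 0 < r) (hθ : 0 < θ) : 0 < psi (r + θ) - psi θ := by
  have h := hasSum_d hr hθ
  have h0 : (0:ℝ) < 1 / (θ + (0:ℕ)) - 1 / (r + θ + (0:ℕ)) := by
    simp only [Nat.cast_zero, add_zero]
    rw [sub_pos]
    apply div_lt_div_of_pos_left one_pos hθ
    linarith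
  calc (0:ℝ) < 1 / (θ + (0:ℕ)) - 1 / (r + θ + (0:ℕ)) := h0
    _ ≤ psi (r + θ) - psi θ := by
        rw [← h.tsum_eq]
        apply Summable.le_tsum h.summable 0
        intro n _
        have h1 : (0:ℝ) < θ + n := by positivity
        have h2 : (0:ℝ) < r + θ + n := by positivity
        rw [sub_nonneg]
        apply div_le_div_of_nonneg_left one_pos.le h1
        linarith

end I0


theorem stmt_2 (r θ t : ℝ) (hr : 0 < r) (hθ : 0 < θ) (ht : 0 ≤ t) :
    IntegrableOn
      (fun p : ℝ => (1 - ((1 - p) / (1 - p * Real.exp (-t))) ^ r) * (p⁻¹ * (1 - p) ^ (θ - 1)))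
      (Set.Ioo 0 1) ∧
    HasSum (fun z : ℕ => Real.exp (-t * ((z : ℝ) + 1)) * digammaPMF r θ (z + 1))
      (1 - (psi (r + θ) - psi θ)⁻¹ *
        ∫ p in Set.Ioo (0 : ℝ) 1,
          (1 - ((1 - p) / (1 - p * Real.exp (-t))) ^ r) * (p⁻¹ * (1 - p) ^ (θ - 1))) := by
  set x : ℝ := Real.exp (-t) with hx
  have hx0 : 0 < x := Real.exp_pos _
  have hx1 : x ≤ 1 := Real.exp_le_one_iff.mpr (by linarith)
  set C := psi (r + θ) - psi θ with hC
  have hCpos : 0 < C := psi_diff_pos hr hθ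
  set W : ℝ → ℝ := fun p => (1 - ((1 - p) / (1 - p * x)) ^ r) * (p⁻¹ * (1 - p) ^ (θ - 1))
    with hW
  set V : ℝ → ℝ := fun p => (1 - (1 - p) ^ r) * (p⁻¹ * (1 - p) ^ (θ - 1)) with hV
  -- basic pointwise facts
  have hpt : ∀ p ∈ Ioo (0:ℝ) 1, 0 < 1 - p * x ∧ 1 - p ≤ 1 - p * x ∧ 0 ≤ W p ∧ W p ≤ V p := by
    intro p hp
    obtain ⟨hp0, hp1⟩ := hp
    have hpx : p * x ≤ p := by nlinarith
    have hpx0 : 0 < p * x := by positivity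
    have h1 : 0 < 1 - p * x := by nlinarith
    have h2 : 1 - p ≤ 1 - p * x := by nlinarith
    have h1p : (0:ℝ) < 1 - p := by linarith
    have hqle : (1 - p) / (1 - p * x) ≤ 1 := by
      rw [div_le_one h1]; exact h2
    have hq0 : 0 ≤ (1 - p) / (1 - p * x) := by positivity
    have hql : 1 - p ≤ (1 - p) / (1 - p * x) := by
      rw [le_div_iff₀ h1]
      nlinarith
    have hk : (0:ℝ) ≤ p⁻¹ * (1 - p) ^ (θ - 1) := by
      have := Real.rpow_nonneg (le_of_lt h1p) (θ - 1)
      positivity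
    refine ⟨h1, h2, ?_, ?_⟩
    · apply mul_nonneg _ hk
      have := Real.rpow_le_one hq0 hqle (le_of_lt hr)
      linarith
    · apply mul_le_mul_of_nonneg_right _ hk
      have := Real.rpow_le_rpow (le_of_lt h1p) hql (le_of_lt hr)
      linarith
  -- part 1 : integrability of W
  have hWmeas : ContinuousOn W (Ioo (0:ℝ) 1) := by
    apply ContinuousOn.mul
    · apply continuousOn_const.sub
      apply ContinuousOn.rpow_const
      · apply ContinuousOn.div
        · exact continuousOn_const.sub continuousOn_id
        · exact continuousOn_const.sub (continuousOn_id.mul continuousOn_const)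
        · intro p hp; exact (hpt p hp).1.ne'
      · intro p hp
        exact Or.inr (le_of_lt hr)
    · apply ContinuousOn.mul
      · exact ContinuousOn.inv₀ continuousOn_id (fun p hp => hp.1.ne')
      · exact continuousOn_one_sub_rpow (θ - 1)
  have hWint : IntegrableOn W (Ioo (0:ℝ) 1) := by
    apply MeasureTheory.Integrable.mono (integrableOn_I0 hr hθ)
    · exact hWmeas.aestronglyMeasurable measurableSet_Ioo
    · rw [MeasureTheory.ae_restrict_iff' measurableSet_Ioo]
      filter_upwards with p hp
      obtain ⟨_, _, hW0, hWV⟩ := hpt p hp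
      rw [Real.norm_eq_abs, Real.norm_eq_abs, abs_of_nonneg hW0,
        abs_of_nonneg (I0_le hr hθ hp).1]
      exact hWV
  refine ⟨hWint, ?_⟩
  -- part 2
  set Φ : ℝ → ℝ := fun p => V p - W p with hΦ
  have hΦint : IntegrableOn Φ (Ioo (0:ℝ) 1) := (integrableOn_I0 hr hθ).sub hWint
  set F : ℕ → ℝ → ℝ := fun m p =>
    risingFac r (m+1) * x^(m+1) / (m+1).factorial * (p^m * (1-p)^((r+θ) - 1)) with hF
  have hrθ : (0:ℝ) < r + θ := by linarith
  have htonelli : HasSum (fun m => ∫ p in Ioo (0:ℝ) 1, F m p) (∫ p in Ioo (0:ℝ) 1, Φ p) := by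
    apply hasSum_integral_Ioo F Φ
    · intro m p hp
      have h1p : (0:ℝ) < 1 - p := by linarith [hp.2]
      have := risingFac_pos hr (m+1)
      have := Real.rpow_nonneg (le_of_lt h1p) ((r+θ)-1)
      have hp0 := hp.1
      positivity
    · intro m
      exact (integrableOn_pow_mul hrθ m).const_mul _
    · intro p hp
      obtain ⟨hp0, hp1⟩ := hp
      obtain ⟨hq, _, _, _⟩ := hpt p ⟨hp0, hp1⟩
      have h1p : (0:ℝ) < 1 - p := by linarith
      have hpx0 : 0 < p * x := by positivity
      have hpx1 : p * x < 1 := by nlinarith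
      have hbin := hasSum_binomial hr hpx0 hpx1
      have hbin1 := (hasSum_nat_add_iff' 1).mpr hbin
      have hsum0 : ∑ i ∈ Finset.range 1, risingFac r i / (i.factorial : ℝ) * (p*x)^i = 1 := by
        simp [risingFac_zero]
      rw [hsum0] at hbin1
      have hbin2 := hbin1.mul_right (p⁻¹ * (1-p)^((r+θ) - 1))
      have hterm : ∀ m : ℕ,
          risingFac r (m+1) / ((m+1).factorial : ℝ) * (p*x)^(m+1) * (p⁻¹ * (1-p)^((r+θ) - 1))
          = F m p := by
        intro m
        have hfm : ((m+1).factorial : ℝ) ≠ 0 := by positivity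
        rw [hF]
        simp only []
        rw [mul_pow, pow_succ]
        field_simp
      rw [funext hterm] at hbin2
      have htar : ((1 - p*x) ^ (-r) - 1) * (p⁻¹ * (1-p)^((r+θ) - 1)) = Φ p := by
        rw [hΦ]
        simp only [hV, hW]
        have e1 : ((1 - p) / (1 - p * x)) ^ r = (1-p)^r / (1 - p*x)^r :=
          Real.div_rpow (le_of_lt h1p) (le_of_lt hq) r
        have e2 : (1 - p*x) ^ (-r) = ((1 - p*x)^r)⁻¹ := Real.rpow_neg (le_of_lt hq) r
        have e3 : (1-p)^((r+θ) - 1) = (1-p)^r * (1-p)^(θ-1) := by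
          rw [← Real.rpow_add h1p]; congr 1; ring
        have e4 : (0:ℝ) < (1 - p*x)^r := Real.rpow_pos_of_pos hq r
        rw [e1, e2, e3]
        field_simp
        ring
      rwa [htar] at hbin2
    · exact hΦint
  -- compute the integrals of F m
  have hFval : ∀ m : ℕ, ∫ p in Ioo (0:ℝ) 1, F m p
      = risingFac r (m+1) * x^(m+1) / (m+1).factorial
        * ((m.factorial : ℝ) / risingFac (r+θ) (m+1)) := by
    intro m
    rw [hF]
    simp only []
    rw [MeasureTheory.integral_const_mul, integral_beta_nat hrθ m]
  -- match terms
  have hmatch : ∀ m : ℕ, Real.exp (-t * ((m : ℝ) + 1)) * digammaPMF r θ (m + 1)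
      = C⁻¹ * ∫ p in Ioo (0:ℝ) 1, F m p := by
    intro m
    rw [hFval m, digammaPMF]
    have hxe : Real.exp (-t * ((m : ℝ) + 1)) = x ^ (m+1) := by
      rw [hx, ← Real.exp_nat_mul]
      congr 1
      push_cast
      ring
    rw [hxe]
    have h1 : risingFac (r+θ) (m+1) ≠ 0 := (risingFac_pos hrθ (m+1)).ne'
    have h2 : ((m+1).factorial : ℝ) ≠ 0 := by positivity
    have h3 : ((m:ℝ) + 1) ≠ 0 := by positivity
    have h4 : (((m+1 : ℕ)):ℝ) = (m:ℝ) + 1 := by push_cast; ring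
    rw [Nat.factorial_succ, h4]
    push_cast
    have hC0 : C ≠ 0 := hCpos.ne'
    rw [← hC]
    field_simp
  rw [funext hmatch]
  have hfinal := htonelli.mul_left C⁻¹
  -- identify the sum value
  have hΦval : ∫ p in Ioo (0:ℝ) 1, Φ p
      = C - ∫ p in Ioo (0:ℝ) 1, W p := by
    rw [hΦ]
    rw [MeasureTheory.integral_sub (integrableOn_I0 hr hθ) hWint]
    rw [hC]
    congr 1
    exact I0_eq hr hθ
  rw [hΦval] at hfinal
  have : C⁻¹ * (C - ∫ p in Ioo (0:ℝ) 1, W p)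
      = 1 - C⁻¹ * ∫ p in Ioo (0:ℝ) 1, W p := by
    field_simp
  rw [this] at hfinal
  exact hfinal
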